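/- If βλmax(A)/δ < 1 (equivalently, λmax((1−δ)I_n + βA) < 1), then the origin is the unique fixed point of the SIS nonlinear map Φ in [0,1]^n, and it is globally stable: for every x ∈ [0,1]^n the iterates Φ^t(x) converge to the zero vector as t → ∞. -/

import Mathlib

open Matrix Finset

/-- Weierstrass product inequality. -/
lemma sis_weierstrass {ι : Type*} (s : Finset ι) (a : ι → ℝ)
    (h0 : ∀ j ∈ s, 0 ≤ a j) (h1 : ∀ j ∈ s, a j ≤ 1) :
    1 - ∑ j ∈ s, a j ≤ ∏ j ∈ s, (1 - a j) := by
  induction s using Finset.cons_induction with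
  | empty => simp
  | cons i s hi ih =>
    rw [Finset.prod_cons, Finset.sum_cons]
    have hP : 1 - ∑ j ∈ s, a j ≤ ∏ j ∈ s, (1 - a j) :=
      ih (fun j hj => h0 j (Finset.mem_cons_of_mem hj)) (fun j hj => h1 j (Finset.mem_cons_of_mem hj))
    have hPn : (0:ℝ) ≤ ∏ j ∈ s, (1 - a j) :=
      Finset.prod_nonneg fun j hj => by linarith [h1 j (Finset.mem_cons_of_mem hj)]
    have hS : (0:ℝ) ≤ ∑ j ∈ s, a j :=
      Finset.sum_nonneg fun j hj => h0 j (Finset.mem_cons_of_mem hj)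
    have hi0 := h0 i (Finset.mem_cons_self i s)
    have hi1 := h1 i (Finset.mem_cons_self i s)
    nlinarith

variable {n : ℕ} {A : Matrix (Fin n) (Fin n) ℝ}

lemma sis_dot_star (hA : A.IsHermitian) (a b : Fin n → ℝ) :
    ((star (hA.eigenvectorUnitary : Matrix (Fin n) (Fin n) ℝ)) *ᵥ a) ⬝ᵥ
    ((star (hA.eigenvectorUnitary : Matrix (Fin n) (Fin n) ℝ)) *ᵥ b) = a ⬝ᵥ b := by
  set U := (hA.eigenvectorUnitary : Matrix (Fin n) (Fin n) ℝ) with hU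
  have h1 : U * Uᵀ = 1 := by
    have := Matrix.mem_unitaryGroup_iff.mp hA.eigenvectorUnitary.2
    rwa [star_eq_conjTranspose, conjTranspose_eq_transpose_of_trivial] at this
  rw [dotProduct_mulVec, vecMul_mulVec, star_eq_conjTranspose,
    conjTranspose_eq_transpose_of_trivial, transpose_transpose, h1, vecMul_one]

lemma sis_mulVec_star (hA : A.IsHermitian) (x : Fin n → ℝ) :
    (star (hA.eigenvectorUnitary : Matrix (Fin n) (Fin n) ℝ)) *ᵥ (A *ᵥ x)
    = fun j => hA.eigenvalues j *
        ((star (hA.eigenvectorUnitary : Matrix (Fin n) (Fin n) ℝ)) *ᵥ x) j := by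
  set U := (hA.eigenvectorUnitary : Matrix (Fin n) (Fin n) ℝ) with hU
  have h1 : star U * A = diagonal hA.eigenvalues * star U := by
    have h2 : star U * A * U = diagonal (RCLike.ofReal ∘ hA.eigenvalues) := by
      have := hA.conjStarAlgAut_star_eigenvectorUnitary
      rw [Unitary.conjStarAlgAut_apply] at this
      simpa only [Unitary.coe_star, star_star] using this
    have h3 : U * star U = 1 := Matrix.mem_unitaryGroup_iff.mp hA.eigenvectorUnitary.2
    calc star U * A = star U * A * (U * star U) := by rw [h3, mul_one]
      _ = (star U * A * U) * star U := by rw [mul_assoc (star U * A)]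
      _ = diagonal hA.eigenvalues * star U := by rw [h2, RCLike.ofReal_real_eq_id]; rfl
  rw [mulVec_mulVec, h1, ← mulVec_mulVec]
  ext j
  rw [mulVec_diagonal]

lemma sis_eig_le (hA : A.IsHermitian) (j : Fin n) : hA.eigenvalues j ≤ sSup (spectrum ℝ A) :=
  le_csSup (A.finite_spectrum.bddAbove) (hA.eigenvalues_mem_spectrum_real j)

lemma sis_rayleigh (hA : A.IsHermitian) (x : Fin n → ℝ) :
    x ⬝ᵥ (A *ᵥ x) ≤ sSup (spectrum ℝ A) * (x ⬝ᵥ x) := by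
  set y := (star (hA.eigenvectorUnitary : Matrix (Fin n) (Fin n) ℝ)) *ᵥ x with hy
  have h1 : x ⬝ᵥ (A *ᵥ x) = ∑ j, hA.eigenvalues j * (y j * y j) := by
    rw [← sis_dot_star hA x (A *ᵥ x), sis_mulVec_star hA x]
    simp [dotProduct, mul_comm, mul_left_comm, mul_assoc]
    rfl
  have h2 : x ⬝ᵥ x = ∑ j, y j * y j := by
    rw [← sis_dot_star hA x x]; rfl
  rw [h1, h2, Finset.mul_sum]
  apply Finset.sum_le_sum
  intro j _
  exact mul_le_mul_of_nonneg_right (sis_eig_le hA j) (mul_self_nonneg _)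

lemma sis_quad_bound (hA : A.IsHermitian) (c d r : ℝ)
    (hcd : ∀ j, |c + d * hA.eigenvalues j| ≤ r) (x : Fin n → ℝ) :
    ((c • (1 : Matrix (Fin n) (Fin n) ℝ) + d • A) *ᵥ x) ⬝ᵥ
    ((c • (1 : Matrix (Fin n) (Fin n) ℝ) + d • A) *ᵥ x) ≤ r ^ 2 * (x ⬝ᵥ x) := by
  set U := (hA.eigenvectorUnitary : Matrix (Fin n) (Fin n) ℝ) with hU
  set y := (star U) *ᵥ x with hy
  have hMx : (c • (1 : Matrix (Fin n) (Fin n) ℝ) + d • A) *ᵥ x = c • x + d • (A *ᵥ x) := by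
    rw [add_mulVec, smul_mulVec, smul_mulVec, one_mulVec]
  have hz : (star U) *ᵥ ((c • (1 : Matrix (Fin n) (Fin n) ℝ) + d • A) *ᵥ x)
      = fun j => (c + d * hA.eigenvalues j) * y j := by
    rw [hMx, mulVec_add, mulVec_smul, mulVec_smul, sis_mulVec_star hA x]
    ext j
    simp [hy]
    ring
  have h0 : ((c • (1 : Matrix (Fin n) (Fin n) ℝ) + d • A) *ᵥ x) ⬝ᵥ
      ((c • (1 : Matrix (Fin n) (Fin n) ℝ) + d • A) *ᵥ x)
      = ∑ j, ((c + d * hA.eigenvalues j) * y j) * ((c + d * hA.eigenvalues j) * y j) := by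
    rw [← sis_dot_star hA, hz]; rfl
  have h2 : x ⬝ᵥ x = ∑ j, y j * y j := by rw [← sis_dot_star hA x x]; rfl
  rw [h0, h2, Finset.mul_sum]
  apply Finset.sum_le_sum
  intro j _
  have := hcd j
  have h3 : (c + d * hA.eigenvalues j) * y j * ((c + d * hA.eigenvalues j) * y j)
      = (c + d * hA.eigenvalues j)^2 * (y j * y j) := by ring
  have h4 : (c + d * hA.eigenvalues j)^2 ≤ r^2 := by
    rw [← sq_abs]
    exact pow_le_pow_left₀ (abs_nonneg _) this 2
  rw [h3]
  exact mul_le_mul_of_nonneg_right h4 (mul_self_nonneg _)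

lemma sis_abs_eig_le (hA : A.IsHermitian) (hpos : ∀ i j, 0 ≤ A i j) (k : Fin n) :
    |hA.eigenvalues k| ≤ sSup (spectrum ℝ A) := by
  set U := (hA.eigenvectorUnitary : Matrix (Fin n) (Fin n) ℝ) with hU
  set v : Fin n → ℝ := ⇑(hA.eigenvectorBasis k) with hv
  have hsv : (star U) *ᵥ v = Pi.single k 1 := hA.star_eigenvectorUnitary_mulVec k
  have hvv : v ⬝ᵥ v = 1 := by
    rw [← sis_dot_star hA v v, hsv]
    simp [dotProduct, Pi.single_apply]
  set w : Fin n → ℝ := fun i => |v i| with hw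
  have hww : w ⬝ᵥ w = 1 := by
    rw [← hvv]; unfold dotProduct
    exact Finset.sum_congr rfl fun i _ => abs_mul_abs_self (v i)
  have hav : A *ᵥ v = hA.eigenvalues k • v := hA.mulVec_eigenvectorBasis k
  have h1 : |v ⬝ᵥ (A *ᵥ v)| ≤ w ⬝ᵥ (A *ᵥ w) := by
    unfold dotProduct mulVec
    refine (Finset.abs_sum_le_sum_abs _ _).trans ?_
    apply Finset.sum_le_sum
    intro i _
    rw [abs_mul]
    refine mul_le_mul_of_nonneg_left ?_ (abs_nonneg _)
    refine (Finset.abs_sum_le_sum_abs _ _).trans ?_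
    apply Finset.sum_le_sum
    intro j _
    rw [abs_mul, abs_of_nonneg (hpos i j)]
  have h2 : w ⬝ᵥ (A *ᵥ w) ≤ sSup (spectrum ℝ A) * (w ⬝ᵥ w) := sis_rayleigh hA w
  have h3 : v ⬝ᵥ (A *ᵥ v) = hA.eigenvalues k := by
    rw [hav, dotProduct_smul, smul_eq_mul, hvv, mul_one]
  rw [h3] at h1
  rw [hww, mul_one] at h2
  exact h1.trans h2

/-- The largest eigenvalue of a (symmetric) real matrix, as the supremum of its real spectrum. -/
noncomputable def lamMax {n : ℕ} (M : Matrix (Fin n) (Fin n) ℝ) : ℝ :=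
  sSup (spectrum ℝ M)

/-- The SIS nonlinear (mean-field) map
`Φ_i(x) = (1−δ)x_i + (1−(1−δ)x_i)(1 − ∏_{j∈N_i}(1−βx_j))`. -/
noncomputable def sisPhi {n : ℕ} (G : SimpleGraph (Fin n)) [DecidableRel G.Adj]
    (β δ : ℝ) (x : Fin n → ℝ) : Fin n → ℝ :=
  fun i => (1 - δ) * x i + (1 - (1 - δ) * x i) * (1 - ∏ j ∈ G.neighborFinset i, (1 - β * x j))

section main
variable (G : SimpleGraph (Fin n)) [DecidableRel G.Adj] {β δ : ℝ}

lemma sis_mem (hβ : β ∈ Set.Ioo (0:ℝ) 1) (hδ : δ ∈ Set.Ioo (0:ℝ) 1)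
    {x : Fin n → ℝ} (hx : x ∈ Set.Icc (0 : Fin n → ℝ) 1) :
    sisPhi G β δ x ∈ Set.Icc (0 : Fin n → ℝ) 1 := by
  obtain ⟨hx0', hx1'⟩ := hx
  have hx0 : ∀ j, 0 ≤ x j := fun j => by simpa using hx0' j
  have hx1 : ∀ j, x j ≤ 1 := fun j => by simpa using hx1' j
  have hp0 : ∀ i, (0:ℝ) ≤ ∏ j ∈ G.neighborFinset i, (1 - β * x j) := fun i =>
    Finset.prod_nonneg fun j _ => by nlinarith [hx0 j, hx1 j, hβ.1, hβ.2]
  have hp1 : ∀ i, ∏ j ∈ G.neighborFinset i, (1 - β * x j) ≤ 1 := fun i =>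
    Finset.prod_le_one (fun j _ => by nlinarith [hx0 j, hx1 j, hβ.1, hβ.2])
      (fun j _ => by nlinarith [hx0 j, hβ.1])
  constructor
  · intro i
    have := hp1 i
    have h0 := hx0 i; have h1 := hx1 i
    simp only [sisPhi, Pi.zero_apply]
    have hq : 0 ≤ 1 - (1 - δ) * x i := by nlinarith [hδ.1, hδ.2]
    have ht1 : 0 ≤ (1 - δ) * x i := by nlinarith [hδ.2]
    have ht2 : 0 ≤ (1 - (1 - δ) * x i) * (1 - ∏ j ∈ G.neighborFinset i, (1 - β * x j)) :=
      mul_nonneg hq (by linarith)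
    linarith
  · intro i
    have := hp0 i
    have h0 := hx0 i; have h1 := hx1 i
    simp only [sisPhi, Pi.one_apply]
    have hq : 0 ≤ 1 - (1 - δ) * x i := by nlinarith [hδ.1, hδ.2]
    have ht2 : (1 - (1 - δ) * x i) * (1 - ∏ j ∈ G.neighborFinset i, (1 - β * x j))
        ≤ (1 - (1 - δ) * x i) * 1 := by
      apply mul_le_mul_of_nonneg_left (by linarith) hq
    linarith

lemma sis_le_mulVec (hβ : β ∈ Set.Ioo (0:ℝ) 1) (hδ : δ ∈ Set.Ioo (0:ℝ) 1)
    {x : Fin n → ℝ} (hx : x ∈ Set.Icc (0 : Fin n → ℝ) 1) (i : Fin n) :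
    sisPhi G β δ x i ≤
      (((1 - δ) • (1 : Matrix (Fin n) (Fin n) ℝ) + β • G.adjMatrix ℝ) *ᵥ x) i := by
  obtain ⟨hx0', hx1'⟩ := hx
  have hx0 : ∀ j, 0 ≤ x j := fun j => by simpa using hx0' j
  have hx1 : ∀ j, x j ≤ 1 := fun j => by simpa using hx1' j
  have hMx : (((1 - δ) • (1 : Matrix (Fin n) (Fin n) ℝ) + β • G.adjMatrix ℝ) *ᵥ x) i
      = (1 - δ) * x i + β * ∑ j ∈ G.neighborFinset i, x j := by
    rw [add_mulVec, smul_mulVec, smul_mulVec, one_mulVec]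
    simp [SimpleGraph.adjMatrix_mulVec_apply]
  rw [hMx]
  have hw : 1 - ∑ j ∈ G.neighborFinset i, β * x j ≤
      ∏ j ∈ G.neighborFinset i, (1 - β * x j) :=
    sis_weierstrass _ _ (fun j _ => by nlinarith [hx0 j, hβ.1])
      (fun j _ => by nlinarith [hx0 j, hx1 j, hβ.1, hβ.2])
  have hsum : ∑ j ∈ G.neighborFinset i, β * x j = β * ∑ j ∈ G.neighborFinset i, x j := by
    rw [Finset.mul_sum]
  have h1 : 1 - ∏ j ∈ G.neighborFinset i, (1 - β * x j)
      ≤ β * ∑ j ∈ G.neighborFinset i, x j := by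
    rw [← hsum]; linarith
  have h2 : 1 - (1 - δ) * x i ≤ 1 := by nlinarith [hx0 i, hδ.2]
  have h3 : (0:ℝ) ≤ 1 - ∏ j ∈ G.neighborFinset i, (1 - β * x j) := by
    have : ∏ j ∈ G.neighborFinset i, (1 - β * x j) ≤ 1 :=
      Finset.prod_le_one (fun j _ => by nlinarith [hx0 j, hx1 j, hβ.1, hβ.2])
        (fun j _ => by nlinarith [hx0 j, hβ.1])
    linarith
  have h4 : (0:ℝ) ≤ 1 - (1 - δ) * x i := by nlinarith [hx0 i, hx1 i, hδ.1, hδ.2]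
  simp only [sisPhi]
  nlinarith

end main

/-- If `β λmax(A) / δ < 1` then the origin is the unique fixed point of the
SIS nonlinear map `Φ` in `[0,1]^n`, and it is globally stable: for every `x ∈ [0,1]^n` the
iterates `Φ^t(x)` converge to the zero vector. -/
theorem stmt1 {n : ℕ} (hn : 1 ≤ n) (G : SimpleGraph (Fin n)) [DecidableRel G.Adj]
    (hG : G.Connected) (β δ : ℝ) (hβ : β ∈ Set.Ioo (0 : ℝ) 1) (hδ : δ ∈ Set.Ioo (0 : ℝ) 1)
    (h : β * lamMax (G.adjMatrix ℝ) / δ < 1) :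
    sisPhi G β δ 0 = 0 ∧
    (∀ x ∈ Set.Icc (0 : Fin n → ℝ) 1, sisPhi G β δ x = x → x = 0) ∧
    ∀ x ∈ Set.Icc (0 : Fin n → ℝ) 1,
      Filter.Tendsto (fun t => (sisPhi G β δ)^[t] x) Filter.atTop (nhds 0) := by
  set A : Matrix (Fin n) (Fin n) ℝ := G.adjMatrix ℝ with hAdef
  have hA : A.IsHermitian := by
    rw [Matrix.IsHermitian, conjTranspose_eq_transpose_of_trivial]
    exact G.isSymm_adjMatrix
  have hApos : ∀ i j, 0 ≤ A i j := by
    intro i j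
    by_cases hadj : G.Adj i j <;> simp [hAdef, SimpleGraph.adjMatrix_apply, hadj]
  set lam : ℝ := lamMax A with hlamdef
  -- lam ≥ 0
  have i0 : Fin n := ⟨0, hn⟩
  have hlam0 : 0 ≤ lam := by
    have hr := sis_rayleigh hA (Pi.single i0 1)
    have e1 : (Pi.single i0 1 : Fin n → ℝ) ⬝ᵥ (A *ᵥ Pi.single i0 1) = 0 := by
      simp only [dotProduct, mulVec_single, Pi.single_apply]
      rw [Finset.sum_eq_single i0] <;> simp +contextual [hAdef, SimpleGraph.irrefl]
    have e2 : (Pi.single i0 1 : Fin n → ℝ) ⬝ᵥ (Pi.single i0 1 : Fin n → ℝ) = 1 := by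
      simp [dotProduct, Pi.single_apply]
    rw [e1, e2, mul_one] at hr
    exact hr
  -- β * lam < δ
  have hβlam : β * lam < δ := by
    rw [div_lt_one hδ.1] at h
    exact h
  set r : ℝ := 1 - δ + β * lam with hrdef
  have hr0 : 0 ≤ r := by
    have : 0 ≤ β * lam := mul_nonneg hβ.1.le hlam0
    simp only [hrdef]; linarith [hδ.2]
  have hr1 : r < 1 := by simp only [hrdef]; linarith
  set M : Matrix (Fin n) (Fin n) ℝ := (1 - δ) • (1 : Matrix (Fin n) (Fin n) ℝ) + β • A with hMdef
  have habsr : ∀ j, |(1 - δ) + β * hA.eigenvalues j| ≤ r := by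
    intro j
    have he := sis_abs_eig_le hA hApos j
    have he' := abs_le.mp he
    rw [show sSup (spectrum ℝ A) = lam from rfl] at he'
    rw [abs_le]
    constructor
    · nlinarith [hβ.1, he'.1, hδ.2]
    · nlinarith [hβ.1, he'.2, hδ.2]
  have hquad : ∀ x : Fin n → ℝ, (M *ᵥ x) ⬝ᵥ (M *ᵥ x) ≤ r ^ 2 * (x ⬝ᵥ x) :=
    fun x => sis_quad_bound hA (1 - δ) β r habsr x
  have hdotnn : ∀ x : Fin n → ℝ, 0 ≤ x ⬝ᵥ x :=
    fun x => Finset.sum_nonneg fun j _ => mul_self_nonneg _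
  have hiter : ∀ (t : ℕ) (x : Fin n → ℝ),
      ((M ^ t) *ᵥ x) ⬝ᵥ ((M ^ t) *ᵥ x) ≤ (r ^ 2) ^ t * (x ⬝ᵥ x) := by
    intro t
    induction t with
    | zero => intro x; simp [one_mulVec]
    | succ t ih =>
      intro x
      rw [pow_succ', ← mulVec_mulVec]
      calc (M *ᵥ ((M ^ t) *ᵥ x)) ⬝ᵥ (M *ᵥ ((M ^ t) *ᵥ x))
          ≤ r ^ 2 * (((M ^ t) *ᵥ x) ⬝ᵥ ((M ^ t) *ᵥ x)) := hquad _
        _ ≤ r ^ 2 * ((r ^ 2) ^ t * (x ⬝ᵥ x)) :=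
            mul_le_mul_of_nonneg_left (ih x) (sq_nonneg r)
        _ = (r ^ 2) ^ (t + 1) * (x ⬝ᵥ x) := by ring
  have hMnn : ∀ i j, 0 ≤ M i j := by
    intro i j
    by_cases hadj : G.Adj i j <;> by_cases h2 : i = j <;>
      simp [hMdef, hAdef, Matrix.add_apply, Matrix.smul_apply, Matrix.one_apply, hadj, h2] <;>
      first | linarith [hβ.1, hδ.2] | positivity
  have hmono : ∀ a b : Fin n → ℝ, (∀ i, a i ≤ b i) → ∀ i, (M *ᵥ a) i ≤ (M *ᵥ b) i := by
    intro a b hab i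
    simp only [mulVec, dotProduct]
    apply Finset.sum_le_sum
    intro j _
    exact mul_le_mul_of_nonneg_left (hab j) (hMnn i j)
  -- iterates bound
  have hkey : ∀ (x : Fin n → ℝ), x ∈ Set.Icc (0 : Fin n → ℝ) 1 → ∀ t : ℕ,
      (sisPhi G β δ)^[t] x ∈ Set.Icc (0 : Fin n → ℝ) 1 ∧
      ∀ i, (sisPhi G β δ)^[t] x i ≤ ((M ^ t) *ᵥ x) i := by
    intro x hx t
    induction t with
    | zero => exact ⟨hx, fun i => by simp [one_mulVec]⟩
    | succ t ih =>
      obtain ⟨ihmem, ihle⟩ := ih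
      constructor
      · rw [Function.iterate_succ_apply']
        exact sis_mem G hβ hδ ihmem
      · intro i
        rw [Function.iterate_succ_apply', pow_succ', ← mulVec_mulVec]
        calc sisPhi G β δ ((sisPhi G β δ)^[t] x) i
            ≤ (M *ᵥ ((sisPhi G β δ)^[t] x)) i := sis_le_mulVec G hβ hδ ihmem i
          _ ≤ (M *ᵥ ((M ^ t) *ᵥ x)) i := hmono _ _ ihle i
  -- the convergence part
  have htend : ∀ x ∈ Set.Icc (0 : Fin n → ℝ) 1,
      Filter.Tendsto (fun t => (sisPhi G β δ)^[t] x) Filter.atTop (nhds 0) := by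
    intro x hx
    rw [tendsto_pi_nhds]
    intro i
    simp only [Pi.zero_apply]
    set c : ℝ := Real.sqrt (x ⬝ᵥ x) with hc
    have hcnn : 0 ≤ c := Real.sqrt_nonneg _
    have hup : ∀ t : ℕ, (sisPhi G β δ)^[t] x i ≤ r ^ t * c := by
      intro t
      refine ((hkey x hx t).2 i).trans ?_
      set v : Fin n → ℝ := (M ^ t) *ᵥ x with hv
      have h1 : (v i) ^ 2 ≤ v ⬝ᵥ v := by
        have : (v i) * (v i) ≤ ∑ j, v j * v j :=
          Finset.single_le_sum (f := fun j => v j * v j)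
            (fun j _ => mul_self_nonneg _) (Finset.mem_univ i)
        calc (v i)^2 = v i * v i := sq (v i) ▸ by ring
          _ ≤ ∑ j, v j * v j := this
          _ = v ⬝ᵥ v := rfl
      have h2 : v ⬝ᵥ v ≤ (r ^ t * c) ^ 2 := by
        have := hiter t x
        have hrw : (r ^ t * c) ^ 2 = (r ^ 2) ^ t * (x ⬝ᵥ x) := by
          rw [mul_pow, ← pow_mul, ← pow_mul, mul_comm 2 t, Real.sq_sqrt (hdotnn x)]
        rw [hrw]
        exact this
      calc v i ≤ |v i| := le_abs_self _
        _ = Real.sqrt ((v i) ^ 2) := (Real.sqrt_sq_eq_abs _).symm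
        _ ≤ Real.sqrt ((r ^ t * c) ^ 2) := Real.sqrt_le_sqrt (h1.trans h2)
        _ = r ^ t * c := Real.sqrt_sq (by positivity)
    have hlo : ∀ t : ℕ, 0 ≤ (sisPhi G β δ)^[t] x i := by
      intro t
      have := (hkey x hx t).1.1 i
      simpa using this
    have hup_tend : Filter.Tendsto (fun t : ℕ => r ^ t * c) Filter.atTop (nhds 0) := by
      have := (tendsto_pow_atTop_nhds_zero_of_lt_one hr0 hr1).mul_const c
      simpa using this
    exact squeeze_zero hlo hup hup_tend
  refine ⟨?_, ?_, htend⟩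
  · funext i
    simp [sisPhi]
  · intro x hx hfix
    have hconst : ∀ t : ℕ, (sisPhi G β δ)^[t] x = x := fun t => Function.iterate_fixed hfix t
    have h1 : Filter.Tendsto (fun t => (sisPhi G β δ)^[t] x) Filter.atTop (nhds x) := by
      simp only [hconst]
      exact tendsto_const_nhds
    exact tendsto_nhds_unique h1 (htend x hx)
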